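/- arXiv:2505.10178 — 2 statements merged into one kernel-verified Lean document; each statement's English description precedes it below -/
import Mathlib

section
/- Let A₁ = [[0,1],[0,1]] and A₂ = [[1,0],[1,-1]] be real 2×2 matrices. Then JSR(A₁, A₂) = 1. -/
open Matrix

/-- Operator norm on real s×s matrices induced by the Euclidean norm. -/
noncomputable def l2OpNorm {s : ℕ} (A : Matrix (Fin s) (Fin s) ℝ) : ℝ :=
  ‖Matrix.toEuclideanCLM (𝕜 := ℝ) A‖

/-- Spectral radius of a real matrix viewed as a complex matrix. -/
noncomputable def specRad {s : ℕ} (A : Matrix (Fin s) (Fin s) ℝ) : ℝ :=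
  (spectralRadius ℂ (A.map (Complex.ofReal : ℝ → ℂ))).toReal

/-- The ordered product `A (w (n-1)) * ⋯ * A (w 0)`. -/
noncomputable def wordProd {s J n : ℕ} (A : Fin J → Matrix (Fin s) (Fin s) ℝ)
    (w : Fin n → Fin J) : Matrix (Fin s) (Fin s) ℝ :=
  ((List.ofFn fun i => A (w i)).reverse).prod

/-- Joint spectral radius of a finite family of real s×s matrices. -/
noncomputable def JSR {s J : ℕ} (A : Fin J → Matrix (Fin s) (Fin s) ℝ) : ℝ :=
  ⨅ n : {m : ℕ // 1 ≤ m}, ⨆ w : Fin (n : ℕ) → Fin J,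
    l2OpNorm (wordProd A w) ^ (1 / ((n : ℕ) : ℝ))

/-- The pair has the finiteness property. -/
def FinitenessProperty {s : ℕ} (A : Fin 2 → Matrix (Fin s) (Fin s) ℝ) : Prop :=
  ∃ n : ℕ, 1 ≤ n ∧ ∃ w : Fin n → Fin 2,
    specRad (wordProd A w) ^ (1 / (n : ℝ)) = JSR A

/-! ### Auxiliary material -/

private lemma aux_opNorm_le (M : Matrix (Fin 2) (Fin 2) ℝ) (c : ℝ) (hc : 0 ≤ c)
    (h : M 0 0 ^ 2 + M 0 1 ^ 2 + M 1 0 ^ 2 + M 1 1 ^ 2 ≤ c ^ 2) : l2OpNorm M ≤ c := by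
  apply ContinuousLinearMap.opNorm_le_bound _ hc
  intro x
  have key : ∀ i, (toEuclideanCLM (𝕜 := ℝ) M x) i = M i 0 * x 0 + M i 1 * x 1 := by
    intro i
    have h2 := congrFun (Matrix.ofLp_toEuclideanCLM (𝕜 := ℝ) M x) i
    simp [-Matrix.ofLp_toEuclideanCLM, Matrix.mulVec, dotProduct, Fin.sum_univ_two] at h2
    exact h2
  rw [EuclideanSpace.norm_eq, EuclideanSpace.norm_eq]
  simp only [Fin.sum_univ_two, Real.norm_eq_abs, sq_abs, key]
  rw [← Real.sqrt_sq hc, ← Real.sqrt_mul (sq_nonneg c)]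
  apply Real.sqrt_le_sqrt
  nlinarith [sq_nonneg (M 0 0 * x 1 - M 0 1 * x 0), sq_nonneg (M 1 0 * x 1 - M 1 1 * x 0),
    sq_nonneg (x 0), sq_nonneg (x 1),
    mul_le_mul_of_nonneg_right h (by positivity : (0:ℝ) ≤ x 0 ^ 2 + x 1 ^ 2)]

private def auxS (M : Matrix (Fin 2) (Fin 2) ℝ) : Prop :=
  M = 0 ∨ M = 1 ∨ M = !![(0:ℝ),1;0,1] ∨ M = !![(1:ℝ),0;1,-1] ∨
  M = !![(1:ℝ),-1;1,-1] ∨ M = !![(0:ℝ),1;0,0] ∨ M = !![(1:ℝ),-1;0,0]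

private lemma aux_closed (M : Matrix (Fin 2) (Fin 2) ℝ) (hM : auxS M) (j : Fin 2) :
    auxS (M * ![!![(0:ℝ), 1; 0, 1], !![(1:ℝ), 0; 1, -1]] j) := by
  unfold auxS at hM ⊢
  fin_cases j <;>
    rcases hM with h | h | h | h | h | h | h <;>
      subst h <;>
        simp only [Matrix.cons_val_zero, Matrix.cons_val_one, Matrix.head_cons, zero_mul,
          one_mul, Matrix.one_fin_two, Matrix.mul_fin_two] <;>
          norm_num [← Matrix.ext_iff, funext_iff, Fin.forall_fin_two, Matrix.one_fin_two]

private lemma aux_wordProd_succ {s J n : ℕ} (A : Fin J → Matrix (Fin s) (Fin s) ℝ)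
    (w : Fin (n + 1) → Fin J) :
    wordProd A w = wordProd A (fun i => w i.succ) * A (w 0) := by
  unfold wordProd
  rw [List.ofFn_succ, List.reverse_cons, List.prod_append, List.prod_singleton]

private lemma aux_mem (n : ℕ) (w : Fin n → Fin 2) :
    auxS (wordProd ![!![(0:ℝ), 1; 0, 1], !![(1:ℝ), 0; 1, -1]] w) := by
  induction n with
  | zero =>
      right; left
      unfold wordProd
      simp
  | succ n ih =>
      rw [aux_wordProd_succ]
      exact aux_closed _ (ih _) _

private lemma aux_norm_le (n : ℕ) (w : Fin n → Fin 2) :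
    l2OpNorm (wordProd ![!![(0:ℝ), 1; 0, 1], !![(1:ℝ), 0; 1, -1]] w) ≤ 2 := by
  have h := aux_mem n w
  rcases h with h | h | h | h | h | h | h <;> rw [h] <;>
    · apply aux_opNorm_le _ 2 (by norm_num)
      norm_num [Matrix.one_fin_two]

/-- The JSR of the pair from Example `tjsr` equals 1. -/
theorem jsr_tjsr_example_eq_one :
    JSR ![!![(0:ℝ), 1; 0, 1], !![(1:ℝ), 0; 1, -1]] = 1 := by
  set A : Fin 2 → Matrix (Fin 2) (Fin 2) ℝ := ![!![(0:ℝ), 1; 0, 1], !![(1:ℝ), 0; 1, -1]] with hA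
  have hlb : ∀ n : {m : ℕ // 1 ≤ m},
      (1:ℝ) ≤ ⨆ w : Fin (n : ℕ) → Fin 2, l2OpNorm (wordProd A w) ^ (1 / ((n : ℕ) : ℝ)) := by
    intro n
    have hnpos : (0:ℝ) < ((n : ℕ) : ℝ) := by exact_mod_cast n.2
    have hw : wordProd A (fun _ : Fin (n : ℕ) => (1 : Fin 2)) = (A 1) ^ (n : ℕ) := by
      unfold wordProd
      simp [List.ofFn_const, List.prod_replicate]
    have hsq : A 1 * A 1 = 1 := by
      rw [hA]
      simp only [Matrix.cons_val_one, Matrix.head_cons]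
      rw [Matrix.one_fin_two]; norm_num [Matrix.mul_fin_two]
    have hT : (toEuclideanCLM (𝕜 := ℝ) (A 1)) ^ 2 = 1 := by
      rw [sq, ← _root_.map_mul, hsq, _root_.map_one]
    have h1 : (1:ℝ) ≤ l2OpNorm ((A 1) ^ (n : ℕ)) := by
      unfold l2OpNorm
      rw [_root_.map_pow]
      set T := toEuclideanCLM (𝕜 := ℝ) (A 1)
      have h2 : T ^ (n : ℕ) * T ^ (n : ℕ) = 1 := by
        rw [← pow_add, ← two_mul, pow_mul, hT, one_pow]
      have h3 : (1:ℝ) = ‖(1 : EuclideanSpace ℝ (Fin 2) →L[ℝ] EuclideanSpace ℝ (Fin 2))‖ :=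
        norm_one.symm
      have h4 := norm_mul_le (T ^ (n : ℕ)) (T ^ (n : ℕ))
      rw [h2, ← h3] at h4
      nlinarith [norm_nonneg (T ^ (n : ℕ))]
    calc (1:ℝ) = 1 ^ (1 / ((n : ℕ) : ℝ)) := (Real.one_rpow _).symm
      _ ≤ l2OpNorm (wordProd A (fun _ : Fin (n : ℕ) => (1 : Fin 2))) ^ (1 / ((n : ℕ) : ℝ)) := by
          apply Real.rpow_le_rpow (by norm_num) _ (by positivity)
          rw [hw]; exact h1
      _ ≤ ⨆ w : Fin (n : ℕ) → Fin 2, l2OpNorm (wordProd A w) ^ (1 / ((n : ℕ) : ℝ)) :=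
          le_ciSup_of_le (Set.Finite.bddAbove (Set.finite_range
            (fun w : Fin (n : ℕ) → Fin 2 => l2OpNorm (wordProd A w) ^ (1 / ((n : ℕ) : ℝ)))))
            (fun _ => 1) le_rfl
  apply le_antisymm
  · -- JSR ≤ 1
    have hbdd : BddBelow (Set.range fun n : {m : ℕ // 1 ≤ m} =>
        ⨆ w : Fin (n : ℕ) → Fin 2, l2OpNorm (wordProd A w) ^ (1 / ((n : ℕ) : ℝ))) := by
      refine ⟨1, ?_⟩
      rintro x ⟨n, rfl⟩
      exact hlb n
    have hJn : ∀ k : ℕ, JSR A ≤ (2:ℝ) ^ (1 / ((k + 1 : ℕ) : ℝ)) := by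
      intro k
      have h1 : JSR A ≤ ⨆ w : Fin (k + 1) → Fin 2,
          l2OpNorm (wordProd A w) ^ (1 / ((k + 1 : ℕ) : ℝ)) :=
        ciInf_le hbdd ⟨k + 1, Nat.succ_le_succ (Nat.zero_le _)⟩
      refine h1.trans (ciSup_le fun w => ?_)
      apply Real.rpow_le_rpow ?_ (aux_norm_le _ w) (by positivity)
      exact norm_nonneg _
    have htend : Filter.Tendsto (fun k : ℕ => (2:ℝ) ^ (1 / ((k + 1 : ℕ) : ℝ)))
        Filter.atTop (nhds 1) := by
      have h0 : Filter.Tendsto (fun k : ℕ => 1 / ((k + 1 : ℕ) : ℝ)) Filter.atTop (nhds 0) := by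
        have := tendsto_one_div_add_atTop_nhds_zero_nat (𝕜 := ℝ)
        convert this using 2 with k
        push_cast; ring
      have := (Filter.Tendsto.rpow (tendsto_const_nhds (x := (2:ℝ))) h0
        (Or.inl (by norm_num)))
      simpa using this
    exact ge_of_tendsto' htend hJn
  · exact le_ciInf hlb
end

section
/- Let A₁ = (1/√2)·[[0,0,-1],[0,0,0],[0,1,0]] and A₂ = (1/√2)·[[1,0,-1],[0,0,-1],[-1,0,-1]] be real 3×3 matrices. Then A₂ is the only spectral maximizing product of the pair (A₁, A₂): for every n ≥ 1 and every word w : Fin n → Fin 2 such that w is not constantly equal to the index of A₂ (i.e., the product A_{w(n-1)} · ⋯ · A_{w(0)} contains at least one factor A₁), the spectral radius satisfies ρ(A_{w(n-1)} · ⋯ · A_{w(0)}) < 1 = JSR(A₁, A₂). -/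
open Matrix

noncomputable def exA₁ : Matrix (Fin 3) (Fin 3) ℝ :=
  (Real.sqrt 2)⁻¹ • !![0, 0, -1; 0, 0, 0; 0, 1, 0]

noncomputable def exA₂ : Matrix (Fin 3) (Fin 3) ℝ :=
  (Real.sqrt 2)⁻¹ • !![1, 0, -1; 0, 0, -1; -1, 0, -1]

set_option linter.unreachableTactic false
set_option linter.unusedTactic false

namespace SMP

noncomputable def r : ℝ := Real.sqrt 2

lemma r_sq : r ^ 2 = 2 := Real.sq_sqrt (by norm_num)
lemma r_pos : 0 < r := Real.sqrt_pos.mpr (by norm_num)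
lemma r_lb : 1.41 ≤ r := by nlinarith [r_sq, r_pos]
lemma r_ub : r ≤ 1.42 := by nlinarith [r_sq, r_pos]
lemma r_inv : (Real.sqrt 2)⁻¹ = r / 2 := by
  have h : r * r = 2 := by nlinarith [r_sq]
  have h0 : r ≠ 0 := ne_of_gt r_pos
  rw [show Real.sqrt 2 = r from rfl]
  field_simp
  linarith [h]

noncomputable def q (x : Fin 3 → ℝ) : ℝ :=
  (6+2*r)*(x 0)^2 + (6+4*r)*(x 1)^2 + 9*(x 2)^2
    - (6+4*r)*(x 0 * x 1) + 6*(x 0 * x 2) - (6+4*r)*(x 1 * x 2)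

lemma q_lower (x : Fin 3 → ℝ) : 3*((x 0)^2 + (x 1)^2 + (x 2)^2) ≤ q x := by
  have key : q x - 3*((x 0)^2 + (x 1)^2 + (x 2)^2)
      = (3+2*r)*(x 0 - x 1 + (9-6*r)*x 2)^2 + (2*r)*(x 1 - x 2)^2 + (16*r-21)*(x 2)^2 := by
    simp only [q]
    linear_combination ((108:ℝ)*(x 2)^2 + (-72:ℝ)*(x 2)^2*r + (-24:ℝ)*(x 1)*(x 2) + (24:ℝ)*(x 0)*(x 2)) * r_sq
  nlinarith [sq_nonneg (x 0 - x 1 + (9-6*r)*x 2), sq_nonneg (x 1 - x 2), sq_nonneg (x 2), r_lb, r_ub,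
    mul_nonneg (by nlinarith [r_lb] : (0:ℝ) ≤ 3+2*r) (sq_nonneg (x 0 - x 1 + (9-6*r)*x 2)),
    mul_nonneg (by nlinarith [r_lb] : (0:ℝ) ≤ 2*r) (sq_nonneg (x 1 - x 2)),
    mul_nonneg (by nlinarith [r_lb] : (0:ℝ) ≤ 16*r-21) (sq_nonneg (x 2))]

lemma q_nonneg (x : Fin 3 → ℝ) : 0 ≤ q x :=
  le_trans (by positivity) (q_lower x)

lemma q_upper (x : Fin 3 → ℝ) : q x ≤ 30*((x 0)^2 + (x 1)^2 + (x 2)^2) := by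
  have key : 30*((x 0)^2 + (x 1)^2 + (x 2)^2) - q x
      = (24-2*r)*(x 0 + (10/71 + 27/284*r)*x 1 + (-9/71 - 3/284*r)*x 2)^2
        + (1647/71 - 1297/284*r)*(x 1 + (56951/281953 + 38988/281953*r)*x 2)^2
        + (5440683/281953 - 272518/281953*r)*(x 2)^2 := by
    simp only [q]
    linear_combination ((-148886559888057/801493736615138:ℝ)*(x 2)^2 + (280671771104937/3205974946460552:ℝ)*(x 2)^2*r + (1786685388/1421325073:ℝ)*(x 1)*(x 2) + (-81/20164:ℝ)*(x 1)*(x 2)*r + (-1647/10082:ℝ)*(x 1)^2 + (729/40328:ℝ)*(x 1)^2*r + (-3/71:ℝ)*(x 0)*(x 2) + (27/71:ℝ)*(x 0)*(x 1)) * r_sq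
  nlinarith [mul_nonneg (by nlinarith [r_ub] : (0:ℝ) ≤ 24-2*r) (sq_nonneg (x 0 + (10/71 + 27/284*r)*x 1 + (-9/71 - 3/284*r)*x 2)),
    mul_nonneg (by nlinarith [r_ub] : (0:ℝ) ≤ 1647/71 - 1297/284*r) (sq_nonneg (x 1 + (56951/281953 + 38988/281953*r)*x 2)),
    mul_nonneg (by nlinarith [r_ub] : (0:ℝ) ≤ 5440683/281953 - 272518/281953*r) (sq_nonneg (x 2))]

end SMP

namespace SMP

lemma A1_mv (x : Fin 3 → ℝ) :
    exA₁.mulVec x 0 = r/2 * (-(x 2)) ∧ exA₁.mulVec x 1 = 0 ∧ exA₁.mulVec x 2 = r/2 * (x 1) := by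
  refine ⟨?_, ?_, ?_⟩ <;>
    simp [exA₁, Matrix.mulVec, dotProduct, Fin.sum_univ_three, r_inv] <;> ring

lemma A2_mv (x : Fin 3 → ℝ) :
    exA₂.mulVec x 0 = r/2 * (x 0 - x 2) ∧ exA₂.mulVec x 1 = r/2 * (-(x 2)) ∧
      exA₂.mulVec x 2 = r/2 * (-(x 0) - x 2) := by
  refine ⟨?_, ?_, ?_⟩ <;>
    simp [exA₂, Matrix.mulVec, dotProduct, Fin.sum_univ_three, r_inv] <;> ring

lemma q_A2 (x : Fin 3 → ℝ) : q (exA₂.mulVec x) ≤ q x := by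
  obtain ⟨h0, h1, h2⟩ := A2_mv x
  have key : q x - q (exA₂.mulVec x) = (3/2 + r) * (x 0 - 2*x 1 + x 2)^2 := by
    simp only [q, h0, h1, h2]
    linear_combination ((-15/4:ℝ)*(x 2)^2 + (1/2:ℝ)*(x 2)^2*r + (-3/2:ℝ)*(x 0)*(x 2) + (1:ℝ)*(x 0)*(x 2)*r + (-9/4:ℝ)*(x 0)^2 + (-1/2:ℝ)*(x 0)^2*r) * r_sq
  nlinarith [mul_nonneg (by nlinarith [r_lb] : (0:ℝ) ≤ 3/2 + r) (sq_nonneg (x 0 - 2*x 1 + x 2))]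

lemma q_A1 (x : Fin 3 → ℝ) : q (exA₁.mulVec x) ≤ 3/4 * q x := by
  obtain ⟨h0, h1, h2⟩ := A1_mv x
  have key : 3/4 * q x - q (exA₁.mulVec x)
      = (9/2 + 3/2*r)*(x 0 + (-5/14 - 3/14*r)*x 1 + (9/14 - 3/14*r)*x 2)^2
        + (-81/56 + 111/56*r)*(x 1 + (-197/287 - 68/287*r)*x 2)^2
        + (2133/1148 - 691/574*r)*(x 2)^2 := by
    simp only [q, h0, h1, h2]
    linear_combination ((-8565237/4612664:ℝ)*(x 2)^2 + (-3137305/4612664:ℝ)*(x 2)^2*r + (17757/8036:ℝ)*(x 1)*(x 2) + (-27/196:ℝ)*(x 1)*(x 2)*r + (-1053/392:ℝ)*(x 1)^2 + (-27/392:ℝ)*(x 1)^2*r + (9/14:ℝ)*(x 0)*(x 2) + (9/14:ℝ)*(x 0)*(x 1)) * r_sq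
  nlinarith [mul_nonneg (by nlinarith [r_lb] : (0:ℝ) ≤ 9/2 + 3/2*r) (sq_nonneg (x 0 + (-5/14 - 3/14*r)*x 1 + (9/14 - 3/14*r)*x 2)),
    mul_nonneg (by nlinarith [r_lb] : (0:ℝ) ≤ -81/56 + 111/56*r) (sq_nonneg (x 1 + (-197/287 - 68/287*r)*x 2)),
    mul_nonneg (by nlinarith [r_lb, r_ub] : (0:ℝ) ≤ 2133/1148 - 691/574*r) (sq_nonneg (x 2))]

noncomputable def v : Fin 3 → ℝ := ![r+2, 1, -r]

lemma A2_fixed : exA₂.mulVec v = v := by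
  funext i
  have h2 : r * r = 2 := by nlinarith [r_sq]
  fin_cases i <;>
    simp [exA₂, v, Matrix.mulVec, dotProduct, Fin.sum_univ_three, r_inv] <;>
    nlinarith [h2]

end SMP

namespace SMP

def good (M : Matrix (Fin 3) (Fin 3) ℝ) : Prop := ∀ x, q (M.mulVec x) ≤ q x
def contr (M : Matrix (Fin 3) (Fin 3) ℝ) : Prop := ∀ x, q (M.mulVec x) ≤ 3/4 * q x

lemma good_one : good 1 := fun x => by rw [Matrix.one_mulVec]

lemma good_mul {M N} (hM : good M) (hN : good N) : good (M * N) := fun x => by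
  rw [← Matrix.mulVec_mulVec]
  exact le_trans (hM _) (hN x)

lemma good_list (L : List (Matrix (Fin 3) (Fin 3) ℝ)) (h : ∀ M ∈ L, good M) :
    good L.prod := by
  induction L with
  | nil => simpa using good_one
  | cons a T ih =>
    rw [List.prod_cons]
    exact good_mul (h a (by simp)) (ih fun M hM => h M (by simp [hM]))

lemma contr_mul_left {M N} (hM : contr M) (hN : good N) : contr (M * N) := fun x => by
  rw [← Matrix.mulVec_mulVec]
  calc q (M.mulVec (N.mulVec x)) ≤ 3/4 * q (N.mulVec x) := hM _
    _ ≤ 3/4 * q x := by nlinarith [hN x]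

lemma contr_mul_right {M N} (hM : good M) (hN : contr N) : contr (M * N) := fun x => by
  rw [← Matrix.mulVec_mulVec]
  exact le_trans (hM _) (hN x)

lemma contr_list (L : List (Matrix (Fin 3) (Fin 3) ℝ)) (h : ∀ M ∈ L, good M)
    (hex : ∃ M ∈ L, contr M) : contr L.prod := by
  induction L with
  | nil => simp at hex
  | cons a T ih =>
    rw [List.prod_cons]
    obtain ⟨M, hM, hMc⟩ := hex
    rcases List.mem_cons.mp hM with h1 | h1
    · subst h1
      exact contr_mul_left hMc (good_list T fun M hM => h M (by simp [hM]))
    · exact contr_mul_right (h a (by simp)) (ih (fun M hM => h M (by simp [hM])) ⟨M, h1, hMc⟩)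

lemma good_A1 : good exA₁ := fun x => le_trans (q_A1 x) (by nlinarith [q_nonneg x])
lemma good_A2 : good exA₂ := q_A2
lemma contr_A1 : contr exA₁ := q_A1

lemma good_entry (j : Fin 2) : good (![exA₁, exA₂] j) := by
  fin_cases j
  · exact good_A1
  · exact good_A2

end SMP

namespace SMP

lemma norm_symm (z : Fin 3 → ℝ) :
    ‖(WithLp.equiv 2 (Fin 3 → ℝ)).symm z‖ = Real.sqrt ((z 0)^2 + (z 1)^2 + (z 2)^2) := by
  rw [EuclideanSpace.norm_eq]
  simp [Fin.sum_univ_three, Real.norm_eq_abs, sq_abs]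

lemma toEuclideanCLM_piLp_equiv_symm' (B : Matrix (Fin 3) (Fin 3) ℝ) (x : Fin 3 → ℝ) :
    Matrix.toEuclideanCLM (𝕜 := ℝ) B ((WithLp.equiv 2 (Fin 3 → ℝ)).symm x)
      = (WithLp.equiv 2 (Fin 3 → ℝ)).symm (Matrix.toLin' B x) := rfl

lemma l2OpNorm_le_of_good {B : Matrix (Fin 3) (Fin 3) ℝ} (hB : good B) :
    l2OpNorm B ≤ Real.sqrt 10 := by
  rw [l2OpNorm]
  refine ContinuousLinearMap.opNorm_le_bound _ (Real.sqrt_nonneg _) fun y => ?_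
  set x : Fin 3 → ℝ := WithLp.equiv 2 (Fin 3 → ℝ) y with hx
  have hy : y = (WithLp.equiv 2 (Fin 3 → ℝ)).symm x := (Equiv.symm_apply_apply _ y).symm
  rw [hy, toEuclideanCLM_piLp_equiv_symm']
  rw [show Matrix.toLin' B x = B.mulVec x from Matrix.toLin'_apply B x]
  rw [norm_symm, norm_symm]
  rw [← Real.sqrt_mul (by norm_num : (0:ℝ) ≤ 10)]
  apply Real.sqrt_le_sqrt
  have h1 := q_lower (B.mulVec x)
  have h2 := q_upper x
  have h3 := hB x
  nlinarith

lemma one_le_l2OpNorm_of_fixed {B : Matrix (Fin 3) (Fin 3) ℝ} (hB : B.mulVec v = v) :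
    1 ≤ l2OpNorm B := by
  have hvpos : 0 < ‖(WithLp.equiv 2 (Fin 3 → ℝ)).symm v‖ := by
    rw [norm_symm]
    apply Real.sqrt_pos.mpr
    have : v 1 = 1 := rfl
    nlinarith [sq_nonneg (v 0), sq_nonneg (v 2)]
  have key : Matrix.toEuclideanCLM (𝕜 := ℝ) B ((WithLp.equiv 2 (Fin 3 → ℝ)).symm v)
      = (WithLp.equiv 2 (Fin 3 → ℝ)).symm v := by
    rw [toEuclideanCLM_piLp_equiv_symm']
    rw [show Matrix.toLin' B v = B.mulVec v from Matrix.toLin'_apply B v, hB]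
  have hle := (Matrix.toEuclideanCLM (𝕜 := ℝ) B).le_opNorm ((WithLp.equiv 2 (Fin 3 → ℝ)).symm v)
  rw [key] at hle
  rw [l2OpNorm]
  exact le_of_mul_le_mul_right (by linarith) hvpos

end SMP

namespace SMP

lemma mulVec_map_re (B : Matrix (Fin 3) (Fin 3) ℝ) (z : Fin 3 → ℂ) (i : Fin 3) :
    ((B.map (Complex.ofReal : ℝ → ℂ)).mulVec z i).re = B.mulVec (fun j => (z j).re) i := by
  simp [Matrix.mulVec, dotProduct, Fin.sum_univ_three, Matrix.map_apply, Complex.mul_re]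

lemma mulVec_map_im (B : Matrix (Fin 3) (Fin 3) ℝ) (z : Fin 3 → ℂ) (i : Fin 3) :
    ((B.map (Complex.ofReal : ℝ → ℂ)).mulVec z i).im = B.mulVec (fun j => (z j).im) i := by
  simp [Matrix.mulVec, dotProduct, Fin.sum_univ_three, Matrix.map_apply, Complex.mul_im]

lemma specRad_le_of_contr {B : Matrix (Fin 3) (Fin 3) ℝ} (hB : contr B) :
    specRad B ≤ 9/10 := by
  have hnorm : ∀ μ ∈ spectrum ℂ (B.map (Complex.ofReal : ℝ → ℂ)), ‖μ‖ ≤ 9/10 := by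
    intro μ hμ
    rw [← AlgEquiv.spectrum_eq (Matrix.toLinAlgEquiv' :
      Matrix (Fin 3) (Fin 3) ℂ ≃ₐ[ℂ] _)] at hμ
    have hev : Module.End.HasEigenvalue
        (Matrix.toLinAlgEquiv' (B.map (Complex.ofReal : ℝ → ℂ))) μ :=
      Module.End.hasEigenvalue_iff_mem_spectrum.mpr hμ
    obtain ⟨z, hz⟩ := hev.exists_hasEigenvector
    have hzeq : (B.map (Complex.ofReal : ℝ → ℂ)).mulVec z = μ • z := by
      have h := hz.apply_eq_smul
      rwa [Matrix.toLinAlgEquiv'_apply] at h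
    set u : Fin 3 → ℝ := fun j => (z j).re with hu
    set vv : Fin 3 → ℝ := fun j => (z j).im with hvv
    have hBu : ∀ i, B.mulVec u i = μ.re * u i - μ.im * vv i := by
      intro i
      rw [← mulVec_map_re, hzeq]
      simp [Complex.mul_re, hu, hvv]
    have hBv : ∀ i, B.mulVec vv i = μ.re * vv i + μ.im * u i := by
      intro i
      rw [← mulVec_map_im, hzeq]
      simp [Complex.mul_im, hu, hvv]
    have hq : q (B.mulVec u) + q (B.mulVec vv)
        = (μ.re^2 + μ.im^2) * (q u + q vv) := by
      simp only [q, hBu, hBv]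
      ring
    have hle : q (B.mulVec u) + q (B.mulVec vv) ≤ 3/4 * (q u + q vv) := by
      linarith [hB u, hB vv]
    have hpos : 0 < q u + q vv := by
      obtain ⟨i, hi⟩ : ∃ i, z i ≠ 0 := by
        by_contra h
        push_neg at h
        exact hz.2 (funext h)
      have hcases : (z i).re ≠ 0 ∨ (z i).im ≠ 0 := by
        by_contra h
        push_neg at h
        exact hi (Complex.ext h.1 h.2)
      have hi2 : 0 < (u i)^2 + (vv i)^2 := by
        have hue : u i = (z i).re := rfl
        have hve : vv i = (z i).im := rfl
        rcases hcases with h' | h'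
        · have := mul_self_pos.mpr h'
          nlinarith [sq_nonneg (vv i)]
        · have := mul_self_pos.mpr h'
          nlinarith [sq_nonneg (u i)]
      have hsum : (u i)^2 + (vv i)^2 ≤ (∑ j, (u j)^2) + (∑ j, (vv j)^2) :=
        add_le_add
          (Finset.single_le_sum (f := fun j => (u j)^2) (fun j _ => sq_nonneg _)
            (Finset.mem_univ i))
          (Finset.single_le_sum (f := fun j => (vv j)^2) (fun j _ => sq_nonneg _)
            (Finset.mem_univ i))
      rw [Fin.sum_univ_three, Fin.sum_univ_three] at hsum
      have l1 := q_lower u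
      have l2 := q_lower vv
      linarith
    have habs : μ.re^2 + μ.im^2 ≤ 3/4 := by
      nlinarith
    have : ‖μ‖^2 ≤ 3/4 := by
      rw [Complex.sq_norm, Complex.normSq_apply]
      nlinarith
    nlinarith [norm_nonneg μ]
  rw [specRad]
  have hsr : spectralRadius ℂ (B.map (Complex.ofReal : ℝ → ℂ)) ≤ ENNReal.ofReal (9/10) := by
    rw [spectralRadius]
    refine iSup₂_le fun μ hμ => ?_
    rw [← enorm_eq_nnnorm, ← ofReal_norm]
    exact ENNReal.ofReal_le_ofReal (hnorm μ hμ)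
  calc (spectralRadius ℂ (B.map (Complex.ofReal : ℝ → ℂ))).toReal
      ≤ (ENNReal.ofReal (9/10)).toReal := ENNReal.toReal_mono ENNReal.ofReal_ne_top hsr
    _ = 9/10 := ENNReal.toReal_ofReal (by norm_num)

end SMP

namespace SMP

lemma l2OpNorm_nonneg (B : Matrix (Fin 3) (Fin 3) ℝ) : 0 ≤ l2OpNorm B := norm_nonneg _

lemma wordProd_good {n : ℕ} (w : Fin n → Fin 2) : good (wordProd ![exA₁, exA₂] w) := by
  apply good_list
  intro M hM
  rw [List.mem_reverse, List.mem_ofFn] at hM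
  obtain ⟨i, rfl⟩ := hM
  exact good_entry (w i)

lemma wordProd_contr {n : ℕ} (w : Fin n → Fin 2) (h : ∃ i, w i ≠ 1) :
    contr (wordProd ![exA₁, exA₂] w) := by
  apply contr_list
  · intro M hM
    rw [List.mem_reverse, List.mem_ofFn] at hM
    obtain ⟨i, rfl⟩ := hM
    exact good_entry (w i)
  · obtain ⟨i, hi⟩ := h
    have h0 : w i = 0 := by
      have h1 : (w i).val < 2 := (w i).isLt
      have h2 : (w i).val ≠ 1 := fun h => hi (Fin.ext h)
      exact Fin.ext (by omega)
    refine ⟨exA₁, ?_, contr_A1⟩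
    rw [List.mem_reverse, List.mem_ofFn]
    exact ⟨i, by show ![exA₁, exA₂] (w i) = exA₁; rw [h0]; simp⟩

lemma fixed_list (L : List (Matrix (Fin 3) (Fin 3) ℝ)) (h : ∀ M ∈ L, M.mulVec v = v) :
    L.prod.mulVec v = v := by
  induction L with
  | nil => simp [Matrix.one_mulVec]
  | cons a T ih =>
    rw [List.prod_cons, ← Matrix.mulVec_mulVec, ih fun M hM => h M (by simp [hM]),
      h a (by simp)]

lemma JSR_ge : 1 ≤ JSR ![exA₁, exA₂] := by
  apply le_ciInf
  intro n
  have hfix : (wordProd ![exA₁, exA₂] (fun _ : Fin (n : ℕ) => 1)).mulVec v = v := by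
    apply fixed_list
    intro M hM
    rw [List.mem_reverse, List.mem_ofFn] at hM
    obtain ⟨i, rfl⟩ := hM
    simpa using A2_fixed
  have h1 : (1:ℝ) ≤ l2OpNorm (wordProd ![exA₁, exA₂] (fun _ : Fin (n : ℕ) => 1)) :=
    one_le_l2OpNorm_of_fixed hfix
  have h2 : (1:ℝ) ≤ l2OpNorm (wordProd ![exA₁, exA₂] (fun _ : Fin (n : ℕ) => 1))
      ^ (1 / ((n : ℕ) : ℝ)) :=
    Real.one_le_rpow h1 (by positivity)
  exact le_trans h2 (le_ciSup (f := fun w : Fin (n : ℕ) → Fin 2 =>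
    l2OpNorm (wordProd ![exA₁, exA₂] w) ^ (1 / ((n : ℕ) : ℝ)))
    (Set.Finite.bddAbove (Set.finite_range _)) (fun _ => 1))

lemma JSR_le : JSR ![exA₁, exA₂] ≤ 1 := by
  have key : ∀ n : {m : ℕ // 1 ≤ m},
      JSR ![exA₁, exA₂] ≤ Real.sqrt 10 ^ (1 / (((n : ℕ)) : ℝ)) := by
    intro n
    refine le_trans (ciInf_le ?_ n) (ciSup_le fun w => ?_)
    · refine ⟨0, Set.forall_mem_range.mpr fun m => Real.iSup_nonneg fun w => ?_⟩
      exact Real.rpow_nonneg (l2OpNorm_nonneg _) _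
    · exact Real.rpow_le_rpow (l2OpNorm_nonneg _)
        (l2OpNorm_le_of_good (wordProd_good w)) (by positivity)
  have htend : Filter.Tendsto (fun k : ℕ => Real.sqrt 10 ^ (1 / (k : ℝ)))
      Filter.atTop (nhds 1) := by
    have h0 : Filter.Tendsto (fun k : ℕ => 1 / (k : ℝ)) Filter.atTop (nhds 0) :=
      tendsto_one_div_atTop_nhds_zero_nat
    have hc : ContinuousAt (fun y : ℝ => Real.sqrt 10 ^ y) 0 :=
      Real.continuousAt_const_rpow (by positivity)
    have := hc.tendsto.comp h0
    simpa [Real.rpow_zero, Function.comp_def] using this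
  refine ge_of_tendsto htend ?_
  filter_upwards [Filter.eventually_ge_atTop 1] with k hk
  exact key ⟨k, hk⟩

end SMP

/-- `A₂` is the only spectral maximizing product of the pair `(A₁, A₂)`: the
JSR equals 1, and every product containing at least one factor `A₁` has
spectral radius strictly less than 1. -/
theorem smp_unique :
    JSR ![exA₁, exA₂] = 1 ∧
      ∀ (n : ℕ), 1 ≤ n → ∀ w : Fin n → Fin 2, (∃ i, w i ≠ 1) →
        specRad (wordProd ![exA₁, exA₂] w) < 1 := by
  constructor
  · exact le_antisymm SMP.JSR_le SMP.JSR_ge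
  · intro n _ w hw
    have := SMP.specRad_le_of_contr (SMP.wordProd_contr w hw)
    linarith
end
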